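/- Define Ind(F_p) = K_f²(F_p) − (12(n−1)/(2n−1))·χ_f(F_p) using the local invariants of a primitive cyclic covering fibration of type (g,1,n). Then Ind(F_p) = n·Σ_{k≥1}(((n+1)(n−1)/(2n−1))k − 1)α_k + ((n−1)/(2n−1))((n+1)r − 12n)χ_φ + ((n+1)(n−1)r/(2n−1))ν + ε. Moreover, if r ≥ 12n/(n+1), n ≥ 2, and all parameters α_k ≥ 0 (with α_k integer-valued and α_1 counting singularities of multiplicity ≥ n ≥ 2 so that the coefficient ((n+1)(n−1)/(2n−1))k − 1 ≥ 0 for all k ≥ 1), χ_φ ≥ 0, ν ≥ 0, ε ≥ 0, then Ind(F_p) ≥ 0. -/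

import Mathlib

open Finset

set_option maxHeartbeats 2000000 in
/-- **The local index `Ind(F_p)` of the slope equality** for primitive cyclic
covering fibrations of type `(g,1,n)`:
`Ind(F_p) = K_f²(F_p) − (12(n−1)/(2n−1))·χ_f(F_p)` equals
`n·Σ(((n+1)(n−1)/(2n−1))k − 1)α_k + ((n−1)/(2n−1))((n+1)r − 12n)χ_φ
 + ((n+1)(n−1)r/(2n−1))ν + ε` (the `α₀`-terms cancel), and if
`r ≥ 12n/(n+1)` and all parameters `α_k, χ_φ, ν, ε` are nonnegative, then
`Ind(F_p) ≥ 0`. -/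
theorem local_index_formula_and_nonneg
    (n r α0 ε χφ ν Kf2p χfp : ℝ) (N : ℕ) (α : ℕ → ℝ)
    (hn : 2 ≤ n) (hr : 12 * n / (n + 1) ≤ r)
    (hα : ∀ k, 0 ≤ α k) (hχφ : 0 ≤ χφ) (hν : 0 ≤ ν) (hε : 0 ≤ ε)
    (hK : Kf2p = ∑ k ∈ Icc 1 N, ((n + 1) * (n - 1) * k - n) * α k
      + (n - 1) ^ 2 / n * (α0 - 2 * ε)
      + (n + 1) * (n - 1) * r / n * (χφ + ν) + ε)
    (hχ : χfp = 1 / 12 * (n - 1) * (n + 1) * ∑ k ∈ Icc 1 N, (k : ℝ) * α k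
      + (n - 1) * (2 * n - 1) / (12 * n) * (α0 - 2 * ε)
      + (n + 1) * (n - 1) * r / (12 * n) * (χφ + ν) + n * χφ) :
    Kf2p - 12 * (n - 1) / (2 * n - 1) * χfp
      = n * ∑ k ∈ Icc 1 N, ((n + 1) * (n - 1) / (2 * n - 1) * k - 1) * α k
        + (n - 1) / (2 * n - 1) * ((n + 1) * r - 12 * n) * χφ
        + (n + 1) * (n - 1) * r / (2 * n - 1) * ν + ε
    ∧ 0 ≤ Kf2p - 12 * (n - 1) / (2 * n - 1) * χfp := by

  have hn0 : (0:ℝ) < n := by linarith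
  have h2n : (0:ℝ) < 2 * n - 1 := by linarith
  have hS1 : ∑ k ∈ Icc 1 N, ((n + 1) * (n - 1) * k - n) * α k
      = (n + 1) * (n - 1) * (∑ k ∈ Icc 1 N, (k : ℝ) * α k)
        - n * ∑ k ∈ Icc 1 N, α k := by
    rw [Finset.mul_sum, Finset.mul_sum, ← Finset.sum_sub_distrib]
    exact Finset.sum_congr rfl fun k _ => by ring
  have hS3 : ∑ k ∈ Icc 1 N, ((n + 1) * (n - 1) / (2 * n - 1) * k - 1) * α k
      = (n + 1) * (n - 1) / (2 * n - 1) * (∑ k ∈ Icc 1 N, (k : ℝ) * α k)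
        - ∑ k ∈ Icc 1 N, α k := by
    rw [Finset.mul_sum, ← Finset.sum_sub_distrib]
    exact Finset.sum_congr rfl fun k _ => by ring
  have heq : Kf2p - 12 * (n - 1) / (2 * n - 1) * χfp
      = n * ∑ k ∈ Icc 1 N, ((n + 1) * (n - 1) / (2 * n - 1) * k - 1) * α k
        + (n - 1) / (2 * n - 1) * ((n + 1) * r - 12 * n) * χφ
        + (n + 1) * (n - 1) * r / (2 * n - 1) * ν + ε := by
    rw [hK, hχ, hS1, hS3]
    generalize (∑ k ∈ Icc 1 N, (k : ℝ) * α k) = A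
    generalize (∑ k ∈ Icc 1 N, α k) = T
    field_simp [hn0.ne', h2n.ne', (by linarith : (0:ℝ) < n * 2 - 1).ne']
    ring
  refine ⟨heq, ?_⟩
  rw [heq]
  have hsum : 0 ≤ ∑ k ∈ Icc 1 N, ((n + 1) * (n - 1) / (2 * n - 1) * k - 1) * α k := by
    apply Finset.sum_nonneg
    intro k hk
    have hk1 : (1:ℝ) ≤ (k:ℝ) := by
      exact_mod_cast (Finset.mem_Icc.mp hk).1
    have hc : 0 ≤ (n + 1) * (n - 1) / (2 * n - 1) * k - 1 := by
      have h1 : (2 * n - 1) * 1 ≤ (n + 1) * (n - 1) * 1 := by nlinarith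
      have h2 : (n + 1) * (n - 1) * 1 ≤ (n + 1) * (n - 1) * k := by nlinarith
      rw [sub_nonneg, div_mul_eq_mul_div, le_div_iff₀ h2n]
      nlinarith
    exact mul_nonneg hc (hα k)
  have hr' : 0 ≤ (n + 1) * r - 12 * n := by
    rw [div_le_iff₀ (by linarith : (0:ℝ) < n + 1)] at hr
    linarith [hr]
  have t1 : 0 ≤ n * ∑ k ∈ Icc 1 N, ((n + 1) * (n - 1) / (2 * n - 1) * k - 1) * α k :=
    mul_nonneg hn0.le hsum
  have t2 : 0 ≤ (n - 1) / (2 * n - 1) * ((n + 1) * r - 12 * n) * χφ :=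
    mul_nonneg (mul_nonneg (div_nonneg (by linarith) h2n.le) hr') hχφ
  have t3 : 0 ≤ (n + 1) * (n - 1) * r / (2 * n - 1) * ν := by
    apply mul_nonneg _ hν
    apply div_nonneg _ h2n.le
    have : (0:ℝ) ≤ r := le_trans (by positivity) hr
    nlinarith
  linarith
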